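/- Let B₁ and B₂ be abelian Lie subalgebras of gl(n,K) and form the semidirect product Lie algebras G₁ = B₁ ⋉ K^n and G₂ = B₂ ⋉ K^n, where B_i acts on K^n by matrix-vector multiplication and where K^n equals the derived ideal [G_i,G_i]. Then G₁ and G₂ are isomorphic as Lie algebras if and only if B₁ and B₂ are conjugate, i.e., there exists an invertible linear map φ : K^n → K^n with B₂ = φ B₁ φ^{-1}. Moreover every Lie algebra isomorphism ψ : G₁ → G₂ has the form ψ(a + x) = φ∘a∘φ^{-1} + (φ∘a∘φ^{-1})(x₀) + φ(x) for some invertible φ with φB₁φ^{-1} = B₂ and some x₀ ∈ K^n. -/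

import Mathlib

open Matrix

/-- Lie bracket of the semidirect product `B ⋉ Kⁿ`, where the abelian algebra `B`
of matrices acts on `Kⁿ` by matrix-vector multiplication. -/
def sdBra {K : Type*} [Field K] {n : ℕ}
    (B : Submodule K (Matrix (Fin n) (Fin n) K)) :
    (B × (Fin n → K)) → (B × (Fin n → K)) → (B × (Fin n → K)) :=
  fun p q =>
    (0, Matrix.mulVec (p.1 : Matrix (Fin n) (Fin n) K) q.2
        - Matrix.mulVec (q.1 : Matrix (Fin n) (Fin n) K) p.2)

set_option maxHeartbeats 1000000 in
set_option synthInstance.maxHeartbeats 400000 in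

lemma exists_x0 {K : Type*} [Field K] {n : ℕ}
    (B : Submodule K (Matrix (Fin n) (Fin n) K))
    (hc : ∀ a ∈ B, ∀ b ∈ B, a * b = b * a)
    (hd : Submodule.span K {x : Fin n → K | ∃ a ∈ B, ∃ y : Fin n → K, Matrix.mulVec a y = x} = ⊤)
    (h : B → (Fin n → K))
    (hco : ∀ a b : B, Matrix.mulVec (a : Matrix (Fin n) (Fin n) K) (h b)
      = Matrix.mulVec (b : Matrix (Fin n) (Fin n) K) (h a)) :
    ∃ x₀ : Fin n → K, ∀ a : B, Matrix.mulVec (a : Matrix (Fin n) (Fin n) K) x₀ = h a := by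
  classical
  set E := Module.End K (Fin n → K) with hE
  set s : Set E := Matrix.mulVecLin '' (B : Set _) with hs
  have hscomm : ∀ a ∈ s, ∀ b ∈ s, a * b = b * a := by
    rintro _ ⟨a, ha, rfl⟩ _ ⟨b, hb, rfl⟩
    have : a * b = b * a := hc a ha b hb
    rw [Module.End.mul_eq_comp, Module.End.mul_eq_comp, ← Matrix.mulVecLin_mul,
      ← Matrix.mulVecLin_mul, this]
  set A : Subalgebra K E := Algebra.adjoin K s with hA
  letI : CommRing A := Algebra.adjoinCommRingOfComm K hscomm
  have hsmul : ∀ (a : A) (v : Fin n → K), a • v = (a : E) v := fun _ _ => rfl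
  have hKA : ∀ (c : K) (v : Fin n → K), (algebraMap K A c) • v = c • v := by
    intro c v
    rw [hsmul]
    show (algebraMap K E c) v = c • v
    rfl
  -- top is f.g. over A
  have hfg : (⊤ : Submodule A (Fin n → K)).FG := by
    refine ⟨Finset.univ.image (fun i => Pi.single i (1 : K)), ?_⟩
    rw [eq_top_iff]
    intro v _
    have hv : v = ∑ i, v i • (Pi.single i (1 : K) : Fin n → K) := by
      ext j
      simp [Finset.sum_apply, Pi.single_apply]
    rw [hv]
    refine Submodule.sum_mem _ fun i _ => ?_
    rw [← hKA]
    exact Submodule.smul_mem _ _ (Submodule.subset_span (by simp))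
  -- the ideal generated by B inside A
  set I : Ideal A := Ideal.span {x : A | (x : E) ∈ s} with hI
  have hle : (⊤ : Submodule A (Fin n → K)) ≤ I • ⊤ := by
    intro v _
    let S : Submodule K (Fin n → K) :=
      { carrier := (I • (⊤ : Submodule A (Fin n → K)) : Submodule A (Fin n → K))
        add_mem' := fun ha hb => Submodule.add_mem _ ha hb
        zero_mem' := Submodule.zero_mem _
        smul_mem' := by
          intro c w hw
          have := Submodule.smul_mem (I • (⊤ : Submodule A (Fin n → K))) (algebraMap K A c) hw
          rwa [hKA] at this }
    have hspan : Submodule.span K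
        {x : Fin n → K | ∃ a ∈ B, ∃ y : Fin n → K, Matrix.mulVec a y = x} ≤ S := by
      rw [Submodule.span_le]
      rintro _ ⟨a, ha, y, rfl⟩
      have hmem : (⟨Matrix.mulVecLin a, Algebra.subset_adjoin ⟨a, ha, rfl⟩⟩ : A) ∈ I :=
        Ideal.subset_span ⟨a, ha, rfl⟩
      have : Matrix.mulVec a y
          = (⟨Matrix.mulVecLin a, Algebra.subset_adjoin ⟨a, ha, rfl⟩⟩ : A) • y := rfl
      show Matrix.mulVec a y ∈ (I • (⊤ : Submodule A (Fin n → K)) : Submodule A (Fin n → K))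
      rw [this]
      exact Submodule.smul_mem_smul hmem trivial
    rw [hd] at hspan
    exact hspan trivial
  obtain ⟨r, hr1, hr0⟩ :=
    Submodule.exists_sub_one_mem_and_smul_eq_zero_of_fg_of_le_smul I ⊤ hfg hle
  have hrE : (r : E) = 0 := by
    apply LinearMap.ext
    intro v
    have := hr0 v trivial
    rw [hsmul] at this
    simpa using this
  have huI : (1 - r : A) ∈ I := by
    have := I.neg_mem hr1
    rwa [neg_sub] at this
  have huE : ((1 - r : A) : E) = 1 := by
    push_cast
    rw [hrE, sub_zero]
  -- key induction
  have key : ∀ x ∈ I, ∃ w : Fin n → K, ∀ b : B,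
      Matrix.mulVec (b : Matrix (Fin n) (Fin n) K) w = (x : E) (h b) := by
    intro x hx
    refine Submodule.span_induction ?_ ?_ ?_ ?_ hx
    · rintro x ⟨b, hb, hxb⟩
      refine ⟨h ⟨b, hb⟩, fun c => ?_⟩
      rw [← hxb]
      show Matrix.mulVec _ _ = Matrix.mulVecLin b (h c)
      rw [Matrix.mulVecLin_apply]
      exact hco c ⟨b, hb⟩
    · refine ⟨0, fun b => ?_⟩
      rw [Matrix.mulVec_zero]
      rfl
    · rintro x y hx hy ⟨w₁, hw₁⟩ ⟨w₂, hw₂⟩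
      refine ⟨w₁ + w₂, fun b => ?_⟩
      rw [Matrix.mulVec_add, hw₁ b, hw₂ b]
      rfl
    · rintro a x hx ⟨w, hw⟩
      refine ⟨(a : E) w, fun b => ?_⟩
      have hbA : Matrix.mulVecLin (b : Matrix (Fin n) (Fin n) K) ∈ A :=
        Algebra.subset_adjoin ⟨b, b.2, rfl⟩
      have hcomm : (⟨_, hbA⟩ : A) * a = a * ⟨_, hbA⟩ := mul_comm _ _
      have hcommE : (Matrix.mulVecLin (b : Matrix (Fin n) (Fin n) K)) * (a : E)
          = (a : E) * (Matrix.mulVecLin (b : Matrix (Fin n) (Fin n) K)) :=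
        congrArg Subtype.val hcomm
      have h2 := DFunLike.congr_fun hcommE w
      change Matrix.mulVec (b : Matrix (Fin n) (Fin n) K) ((a : E) w)
          = (a : E) (Matrix.mulVec (b : Matrix (Fin n) (Fin n) K) w) at h2
      have h3 : ((a • x : A) : E) (h b) = (a : E) ((x : E) (h b)) := rfl
      rw [h3, ← hw b]
      exact h2
  obtain ⟨w, hw⟩ := key _ huI
  refine ⟨w, fun b => ?_⟩
  rw [hw b, huE]
  rfl


section Forward

variable {K : Type*} [Field K] {n : ℕ}
  (B₁ B₂ : Submodule K (Matrix (Fin n) (Fin n) K))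

theorem stmt5_forward
    (h₂ : ∀ a ∈ B₂, ∀ b ∈ B₂, a * b = b * a)
    (hd₁ : Submodule.span K
      {x : Fin n → K | ∃ a ∈ B₁, ∃ y : Fin n → K, Matrix.mulVec a y = x} = ⊤)
    (hd₂ : Submodule.span K
      {x : Fin n → K | ∃ a ∈ B₂, ∃ y : Fin n → K, Matrix.mulVec a y = x} = ⊤)
    (hx0 : ∀ (h : B₂ → (Fin n → K)),
      (∀ a b : B₂, Matrix.mulVec (a : Matrix (Fin n) (Fin n) K) (h b)
        = Matrix.mulVec (b : Matrix (Fin n) (Fin n) K) (h a)) →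
      ∃ x₀ : Fin n → K, ∀ a : B₂, Matrix.mulVec (a : Matrix (Fin n) (Fin n) K) x₀ = h a)
    (ψ : (B₁ × (Fin n → K)) ≃ₗ[K] (B₂ × (Fin n → K)))
    (hψ : ∀ p q, ψ (sdBra B₁ p q) = sdBra B₂ (ψ p) (ψ q)) :
    ∃ (P : Matrix (Fin n) (Fin n) K) (x₀ : Fin n → K), IsUnit P.det ∧
        Submodule.map ((LinearMap.mulLeft K P).comp (LinearMap.mulRight K P⁻¹)) B₁
          = B₂ ∧
        ∀ (a : B₁) (x : Fin n → K),
          ((ψ (a, x)).1 : Matrix (Fin n) (Fin n) K)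
              = P * (a : Matrix (Fin n) (Fin n) K) * P⁻¹ ∧
          (ψ (a, x)).2
              = Matrix.mulVec (P * (a : Matrix (Fin n) (Fin n) K) * P⁻¹) x₀
                + Matrix.mulVec P x := by
  classical
  set V := Fin n → K
  -- first components of ψ on 0 × V vanish
  set L : V →ₗ[K] B₂ :=
    (LinearMap.fst K B₂ V).comp (ψ.toLinearMap.comp (LinearMap.inr K B₁ V)) with hLdef
  have hbra0 : ∀ (a : B₁) (y : V), sdBra B₁ (a, 0) (0, y)
      = ((0 : B₁), Matrix.mulVec (a : Matrix (Fin n) (Fin n) K) y) := by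
    intro a y
    simp [sdBra]
  have hL : ∀ x : V, (ψ (0, x)).1 = 0 := by
    have hker : Submodule.span K
        {x : V | ∃ a ∈ B₁, ∃ y : V, Matrix.mulVec a y = x} ≤ LinearMap.ker L := by
      rw [Submodule.span_le]
      rintro _ ⟨a, ha, y, rfl⟩
      have h1 := hψ (⟨a, ha⟩, 0) (0, y)
      rw [hbra0 ⟨a, ha⟩ y] at h1
      have : L (Matrix.mulVec a y) = (sdBra B₂ (ψ (⟨a, ha⟩, 0)) (ψ (0, y))).1 := by
        show (ψ ((0 : B₁), Matrix.mulVec a y)).1 = _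
        rw [h1]
      simp only [SetLike.mem_coe, LinearMap.mem_ker]
      rw [this]
      rfl
    rw [hd₁, top_le_iff] at hker
    intro x
    have : L x = 0 := by rw [← LinearMap.mem_ker, hker]; trivial
    exact this
  set φ : V →ₗ[K] V :=
    (LinearMap.snd K B₂ V).comp (ψ.toLinearMap.comp (LinearMap.inr K B₁ V)) with hφdef
  have hψ0x : ∀ x : V, ψ (0, x) = (0, φ x) := fun x => Prod.ext (hL x) rfl
  have hφinj : Function.Injective φ := by
    rw [injective_iff_map_eq_zero]
    intro x hx
    have : ψ (0, x) = ψ (0, 0) := by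
      rw [hψ0x x, hψ0x 0, hx, map_zero]
    have := ψ.injective this
    exact congrArg Prod.snd this
  have hφsurj : Function.Surjective φ := LinearMap.injective_iff_surjective.mp hφinj
  set e : V ≃ₗ[K] V := LinearEquiv.ofBijective φ ⟨hφinj, hφsurj⟩ with hedef
  set P : Matrix (Fin n) (Fin n) K := LinearMap.toMatrix' (φ : V →ₗ[K] V) with hPdef
  set Q : Matrix (Fin n) (Fin n) K := LinearMap.toMatrix' (e.symm : V →ₗ[K] V) with hQdef
  have hPQ : P * Q = 1 := by
    rw [hPdef, hQdef, ← LinearMap.toMatrix'_comp, ← LinearMap.toMatrix'_id]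
    congr 1
    apply LinearMap.ext
    intro x
    show φ (e.symm x) = x
    exact e.apply_symm_apply x
  have hQP : Q * P = 1 := by
    rw [hPdef, hQdef, ← LinearMap.toMatrix'_comp, ← LinearMap.toMatrix'_id]
    congr 1
    apply LinearMap.ext
    intro x
    show e.symm (φ x) = x
    exact e.symm_apply_apply x
  have hPdet : IsUnit P.det := by
    apply IsUnit.of_mul_eq_one Q.det
    rw [← Matrix.det_mul, hPQ, Matrix.det_one]
  have hPinv : P⁻¹ = Q := Matrix.inv_eq_right_inv hPQ
  have hmulVecP : ∀ x : V, Matrix.mulVec P x = φ x := by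
    intro x
    rw [← Matrix.toLin'_apply, hPdef, Matrix.toLin'_toMatrix']
  set f : B₁ →ₗ[K] B₂ :=
    (LinearMap.fst K B₂ V).comp (ψ.toLinearMap.comp (LinearMap.inl K B₁ V)) with hfdef
  set g : B₁ →ₗ[K] V :=
    (LinearMap.snd K B₂ V).comp (ψ.toLinearMap.comp (LinearMap.inl K B₁ V)) with hgdef
  have hsplit : ∀ (a : B₁) (x : V), ψ (a, x) = (f a, g a + φ x) := by
    intro a x
    have hax : ((a, x) : B₁ × V) = (a, (0 : V)) + ((0 : B₁), x) := by
      ext <;> simp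
    rw [hax, map_add, hψ0x]
    refine Prod.ext ?_ ?_
    · show (ψ (a, 0)).1 + (0 : B₂) = f a
      rw [add_zero]
      rfl
    · show (ψ (a, 0)).2 + φ x = g a + φ x
      rfl
  -- conjugation relation
  have hconj : ∀ (a : B₁) (x : V),
      φ (Matrix.mulVec (a : Matrix (Fin n) (Fin n) K) x)
        = Matrix.mulVec ((f a : Matrix (Fin n) (Fin n) K)) (φ x) := by
    intro a x
    have h1 := hψ (a, 0) (0, x)
    rw [hbra0 a x] at h1
    have h2 : ψ ((0 : B₁), Matrix.mulVec (a : Matrix (Fin n) (Fin n) K) x)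
        = (0, φ (Matrix.mulVec (a : Matrix (Fin n) (Fin n) K) x)) := hψ0x _
    rw [h2] at h1
    have h3 := congrArg Prod.snd h1
    simp only [sdBra] at h3
    rw [hsplit a 0, hψ0x x] at h3
    simpa using h3
  have hmat : ∀ (Mx My : Matrix (Fin n) (Fin n) K),
      (∀ x, Matrix.mulVec Mx x = Matrix.mulVec My x) → Mx = My := by
    intro Mx My hxy
    apply Matrix.toLin'.injective
    apply LinearMap.ext
    intro x
    rw [Matrix.toLin'_apply, Matrix.toLin'_apply, hxy]
  have hPa : ∀ a : B₁, P * (a : Matrix (Fin n) (Fin n) K)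
      = (f a : Matrix (Fin n) (Fin n) K) * P := by
    intro a
    apply hmat
    intro x
    rw [← Matrix.mulVec_mulVec, ← Matrix.mulVec_mulVec, hmulVecP, hmulVecP, hconj]
  have hfa : ∀ a : B₁, (f a : Matrix (Fin n) (Fin n) K)
      = P * (a : Matrix (Fin n) (Fin n) K) * P⁻¹ := by
    intro a
    calc (f a : Matrix (Fin n) (Fin n) K)
        = (f a : Matrix (Fin n) (Fin n) K) * (P * P⁻¹) := by
          rw [Matrix.mul_nonsing_inv _ hPdet, Matrix.mul_one]
      _ = ((f a : Matrix (Fin n) (Fin n) K) * P) * P⁻¹ := by rw [Matrix.mul_assoc]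
      _ = P * (a : Matrix (Fin n) (Fin n) K) * P⁻¹ := by rw [← hPa]
  -- surjectivity of f
  have hfsurj : Function.Surjective f := by
    intro b
    refine ⟨(ψ.symm (b, 0)).1, ?_⟩
    have h1 : ψ ((ψ.symm (b, 0)).1, (ψ.symm (b, 0)).2) = (b, 0) := by
      rw [← Prod.mk.eta (p := ψ.symm (b, 0))] at *
      exact ψ.apply_symm_apply (b, 0)
    rw [hsplit] at h1
    exact congrArg Prod.fst h1
  have hfinj : Function.Injective f := by
    rw [injective_iff_map_eq_zero]
    intro a ha
    obtain ⟨x, hx⟩ := hφsurj (g a)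
    have h1 : ψ (a, (0 : V)) = ψ ((0 : B₁), x) := by
      rw [hψ0x, hx, hsplit, ha]
      ext <;> simp
    have := ψ.injective h1
    exact congrArg Prod.fst this
  set fe : B₁ ≃ₗ[K] B₂ := LinearEquiv.ofBijective f ⟨hfinj, hfsurj⟩ with hfedef
  -- the map equality
  have hmap : Submodule.map ((LinearMap.mulLeft K P).comp (LinearMap.mulRight K P⁻¹)) B₁
      = B₂ := by
    apply le_antisymm
    · rintro _ ⟨a, ha, rfl⟩
      show P * ((a : Matrix (Fin n) (Fin n) K) * P⁻¹) ∈ B₂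
      rw [← Matrix.mul_assoc, ← hfa ⟨a, ha⟩]
      exact (f ⟨a, ha⟩).2
    · intro b hb
      obtain ⟨a, hab⟩ := hfsurj ⟨b, hb⟩
      refine ⟨(a : Matrix (Fin n) (Fin n) K), a.2, ?_⟩
      show P * ((a : Matrix (Fin n) (Fin n) K) * P⁻¹) = b
      rw [← Matrix.mul_assoc, ← hfa a, hab]
  -- cocycle
  have hg : ∀ a b : B₁,
      Matrix.mulVec ((f a : Matrix (Fin n) (Fin n) K)) (g b)
        = Matrix.mulVec ((f b : Matrix (Fin n) (Fin n) K)) (g a) := by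
    intro a b
    have h1 := hψ (a, 0) (b, 0)
    have h2 : sdBra B₁ (a, 0) (b, 0) = 0 := by simp [sdBra]
    rw [h2, map_zero] at h1
    have h3 := congrArg Prod.snd h1.symm
    simp only [sdBra] at h3
    rw [hsplit a 0, hsplit b 0] at h3
    simp only [map_zero, add_zero, Prod.snd_zero] at h3
    rw [sub_eq_zero] at h3
    exact h3
  have hco : ∀ b c : B₂,
      Matrix.mulVec ((b : Matrix (Fin n) (Fin n) K)) (g (fe.symm c))
        = Matrix.mulVec ((c : Matrix (Fin n) (Fin n) K)) (g (fe.symm b)) := by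
    intro b c
    have hb : (b : Matrix (Fin n) (Fin n) K) = (f (fe.symm b) : Matrix (Fin n) (Fin n) K) := by
      rw [show f (fe.symm b) = fe (fe.symm b) from rfl, fe.apply_symm_apply]
    have hc : (c : Matrix (Fin n) (Fin n) K) = (f (fe.symm c) : Matrix (Fin n) (Fin n) K) := by
      rw [show f (fe.symm c) = fe (fe.symm c) from rfl, fe.apply_symm_apply]
    rw [hb, hc]
    exact hg (fe.symm b) (fe.symm c)
  obtain ⟨x₀, hx₀⟩ := hx0 (fun b => g (fe.symm b)) hco
  have hga : ∀ a : B₁, g a = Matrix.mulVec ((f a : Matrix (Fin n) (Fin n) K)) x₀ := by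
    intro a
    have := hx₀ (f a)
    rw [show fe.symm (f a) = a from fe.symm_apply_apply a] at this
    exact this.symm
  refine ⟨P, x₀, hPdet, hmap, ?_⟩
  intro a x
  have hfst : (ψ (a, x)).1 = f a := by rw [hsplit a x]
  have hsnd : (ψ (a, x)).2 = g a + φ x := by rw [hsplit a x]
  constructor
  · rw [hfst, hfa]
  · rw [hsnd, hga, hfa, hmulVecP]

theorem stmt5_backward (P : Matrix (Fin n) (Fin n) K) (hPdet : IsUnit P.det)
    (hmap : Submodule.map ((LinearMap.mulLeft K P).comp (LinearMap.mulRight K P⁻¹)) B₁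
      = B₂) :
    ∃ ψ : (B₁ × (Fin n → K)) ≃ₗ[K] (B₂ × (Fin n → K)),
      ∀ p q, ψ (sdBra B₁ p q) = sdBra B₂ (ψ p) (ψ q) := by
  classical
  let conj : Matrix (Fin n) (Fin n) K ≃ₗ[K] Matrix (Fin n) (Fin n) K := LinearEquiv.ofLinear
    ((LinearMap.mulLeft K P).comp (LinearMap.mulRight K P⁻¹))
    ((LinearMap.mulLeft K P⁻¹).comp (LinearMap.mulRight K P))
    (by
      apply LinearMap.ext
      intro m
      show P * ((P⁻¹ * (m * P)) * P⁻¹) = m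
      rw [Matrix.mul_assoc P⁻¹ (m * P) P⁻¹, Matrix.mul_nonsing_inv_cancel_right P m hPdet,
        Matrix.mul_nonsing_inv_cancel_left P m hPdet])
    (by
      apply LinearMap.ext
      intro m
      show P⁻¹ * ((P * (m * P⁻¹)) * P) = m
      rw [Matrix.mul_assoc P (m * P⁻¹) P, Matrix.nonsing_inv_mul_cancel_right P m hPdet,
        Matrix.nonsing_inv_mul_cancel_left P m hPdet])
  have hmap' : Submodule.map (conj : Matrix (Fin n) (Fin n) K →ₗ[K] Matrix (Fin n) (Fin n) K) B₁ = B₂ := hmap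
  let eB : B₁ ≃ₗ[K] B₂ := (conj.submoduleMap B₁).trans (LinearEquiv.ofEq _ _ hmap')
  let eV : (Fin n → K) ≃ₗ[K] (Fin n → K) := LinearEquiv.ofLinear
    (Matrix.mulVecLin P) (Matrix.mulVecLin P⁻¹)
    (by rw [← Matrix.mulVecLin_mul, Matrix.mul_nonsing_inv _ hPdet, Matrix.mulVecLin_one])
    (by rw [← Matrix.mulVecLin_mul, Matrix.nonsing_inv_mul _ hPdet, Matrix.mulVecLin_one])
  refine ⟨eB.prodCongr eV, ?_⟩
  have hcoe : ∀ c : B₁, ((eB c : Matrix (Fin n) (Fin n) K))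
      = P * ((c : Matrix (Fin n) (Fin n) K) * P⁻¹) := fun c => rfl
  have heV : ∀ v : Fin n → K, eV v = Matrix.mulVec P v := fun v => rfl
  have hkey : ∀ (c : B₁) (v : Fin n → K),
      Matrix.mulVec ((eB c : Matrix (Fin n) (Fin n) K)) (Matrix.mulVec P v)
        = Matrix.mulVec P (Matrix.mulVec (c : Matrix (Fin n) (Fin n) K) v) := by
    intro c v
    rw [hcoe, Matrix.mulVec_mulVec, Matrix.mulVec_mulVec,
      Matrix.mul_assoc P ((c : Matrix (Fin n) (Fin n) K) * P⁻¹) P,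
      Matrix.nonsing_inv_mul_cancel_right P (c : Matrix (Fin n) (Fin n) K) hPdet]
  rintro ⟨a, x⟩ ⟨b, y⟩
  refine Prod.ext ?_ ?_
  · show eB 0 = 0
    exact map_zero _
  · show eV (Matrix.mulVec (a : Matrix (Fin n) (Fin n) K) y
        - Matrix.mulVec (b : Matrix (Fin n) (Fin n) K) x)
      = Matrix.mulVec ((eB a : Matrix (Fin n) (Fin n) K)) (eV y)
        - Matrix.mulVec ((eB b : Matrix (Fin n) (Fin n) K)) (eV x)
    rw [map_sub]
    simp only [heV]
    rw [hkey, hkey]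

end Forward

/-- for abelian matrix subalgebras B₁, B₂ whose semidirect products
with Kⁿ have derived ideal Kⁿ, the Lie algebras B₁ ⋉ Kⁿ and B₂ ⋉ Kⁿ are
isomorphic iff B₁ and B₂ are conjugate; and every isomorphism has the stated
affine form. -/
theorem stmt5 {K : Type*} [Field K] [CharZero K] {n : ℕ}
    (B₁ B₂ : Submodule K (Matrix (Fin n) (Fin n) K))
    (h₁ : ∀ a ∈ B₁, ∀ b ∈ B₁, a * b = b * a)
    (h₂ : ∀ a ∈ B₂, ∀ b ∈ B₂, a * b = b * a)
    (hd₁ : Submodule.span K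
      {x : Fin n → K | ∃ a ∈ B₁, ∃ y : Fin n → K, Matrix.mulVec a y = x} = ⊤)
    (hd₂ : Submodule.span K
      {x : Fin n → K | ∃ a ∈ B₂, ∃ y : Fin n → K, Matrix.mulVec a y = x} = ⊤) :
    ((∃ ψ : (B₁ × (Fin n → K)) ≃ₗ[K] (B₂ × (Fin n → K)),
        ∀ p q, ψ (sdBra B₁ p q) = sdBra B₂ (ψ p) (ψ q)) ↔
      (∃ P : Matrix (Fin n) (Fin n) K, IsUnit P.det ∧
        Submodule.map ((LinearMap.mulLeft K P).comp (LinearMap.mulRight K P⁻¹)) B₁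
          = B₂)) ∧
    (∀ ψ : (B₁ × (Fin n → K)) ≃ₗ[K] (B₂ × (Fin n → K)),
      (∀ p q, ψ (sdBra B₁ p q) = sdBra B₂ (ψ p) (ψ q)) →
      ∃ (P : Matrix (Fin n) (Fin n) K) (x₀ : Fin n → K), IsUnit P.det ∧
        Submodule.map ((LinearMap.mulLeft K P).comp (LinearMap.mulRight K P⁻¹)) B₁
          = B₂ ∧
        ∀ (a : B₁) (x : Fin n → K),
          ((ψ (a, x)).1 : Matrix (Fin n) (Fin n) K)
              = P * (a : Matrix (Fin n) (Fin n) K) * P⁻¹ ∧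
          (ψ (a, x)).2
              = Matrix.mulVec (P * (a : Matrix (Fin n) (Fin n) K) * P⁻¹) x₀
                + Matrix.mulVec P x) := by
  constructor
  · constructor
    · rintro ⟨ψ, hψ⟩
      obtain ⟨P, x₀, hPdet, hmap, -⟩ :=
        stmt5_forward B₁ B₂ h₂ hd₁ hd₂ (exists_x0 B₂ h₂ hd₂) ψ hψ
      exact ⟨P, hPdet, hmap⟩
    · rintro ⟨P, hPdet, hmap⟩
      exact stmt5_backward B₁ B₂ P hPdet hmap
  · intro ψ hψ
    exact stmt5_forward B₁ B₂ h₂ hd₁ hd₂ (exists_x0 B₂ h₂ hd₂) ψ hψ
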